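/- Let (V, J, R) be an algebraic Kähler model of real dimension 2m with m ≥ 2, and suppose ⟨R(X,JX)Y,JX⟩ = 0 for all vectors X, Y ∈ V such that X, JX, Y, JY are orthonormal (pointwise constant holomorphic sectional curvature). Then every totally real subspace W of V is very special for R: for all v, w ∈ W one has R(v, w) v ∈ W. -/

import Mathlib

open RealInnerProductSpace Module

/-- An algebraic curvature tensor on a real inner product space `V`. -/
structure CurvatureTensor (V : Type*) [NormedAddCommGroup V] [InnerProductSpace ℝ V] where
  R : V → V → V → V
  lin₁ : ∀ Y Z, IsLinearMap ℝ fun X => R X Y Z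
  lin₂ : ∀ X Z, IsLinearMap ℝ fun Y => R X Y Z
  lin₃ : ∀ X Y, IsLinearMap ℝ fun Z => R X Y Z
  antisymm₁ : ∀ X Y Z W, ⟪R X Y Z, W⟫ = -⟪R Y X Z, W⟫
  antisymm₂ : ∀ X Y Z W, ⟪R X Y Z, W⟫ = -⟪R X Y W, Z⟫
  pair_symm : ∀ X Y Z W, ⟪R X Y Z, W⟫ = ⟪R Z W X, Y⟫
  bianchi : ∀ X Y Z, R X Y Z + R Y Z X + R Z X Y = 0

/-- An algebraic Kähler model: an algebraic curvature tensor together with a compatible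
orthogonal complex structure `J`. -/
structure KahlerModel (V : Type*) [NormedAddCommGroup V] [InnerProductSpace ℝ V]
    extends CurvatureTensor V where
  J : V →ₗ[ℝ] V
  J_isometry : ∀ X Y, ⟪J X, J Y⟫ = ⟪X, Y⟫
  J_sq : ∀ X, J (J X) = -X
  R_J_invariant : ∀ X Y Z, R (J X) (J Y) Z = R X Y Z
  R_J_commute : ∀ X Y Z, R X Y (J Z) = J (R X Y Z)

/-- A subspace `W` is totally real (antiholomorphic) if `J W` is orthogonal to `W`. -/
def KahlerModel.IsTotallyReal {V : Type*} [NormedAddCommGroup V] [InnerProductSpace ℝ V]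
    (T : KahlerModel V) (W : Submodule ℝ V) : Prop :=
  ∀ v ∈ W, ∀ u ∈ W, ⟪T.J v, u⟫ = 0

namespace KahlerModel

variable {V : Type*} [NormedAddCommGroup V] [InnerProductSpace ℝ V]

/-- The quadrilinear curvature form. -/
def q (T : KahlerModel V) (X Y Z W : V) : ℝ := ⟪T.R X Y Z, W⟫

variable (T : KahlerModel V)

lemma q_swap₁ (X Y Z W : V) : T.q X Y Z W = -T.q Y X Z W := T.antisymm₁ X Y Z W

lemma q_swap₂ (X Y Z W : V) : T.q X Y Z W = -T.q X Y W Z := T.antisymm₂ X Y Z W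

lemma q_pair (X Y Z W : V) : T.q X Y Z W = T.q Z W X Y := T.pair_symm X Y Z W

lemma q_self₁ (X Z W : V) : T.q X X Z W = 0 := by
  have := T.q_swap₁ X X Z W; linarith

lemma q_self₂ (X Y Z : V) : T.q X Y Z Z = 0 := by
  have := T.q_swap₂ X Y Z Z; linarith

lemma q_J12 (X Y Z W : V) : T.q (T.J X) (T.J Y) Z W = T.q X Y Z W := by
  unfold q; rw [T.R_J_invariant]

lemma q_J34 (X Y Z W : V) : T.q X Y (T.J Z) (T.J W) = T.q X Y Z W := by
  unfold q; rw [T.R_J_commute, T.J_isometry]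

lemma q_bianchi (X Y Z W : V) : T.q X Y Z W + T.q Y Z X W + T.q Z X Y W = 0 := by
  have h := congrArg (fun t => (inner ℝ t W : ℝ)) (T.bianchi X Y Z)
  simpa [inner_add_left, q] using h

lemma q_add₁ (X X' Y Z W : V) :
    T.q (X + X') Y Z W = T.q X Y Z W + T.q X' Y Z W := by
  unfold q; rw [(T.lin₁ Y Z).map_add, inner_add_left]

lemma q_add₂ (X Y Y' Z W : V) :
    T.q X (Y + Y') Z W = T.q X Y Z W + T.q X Y' Z W := by
  unfold q; rw [(T.lin₂ X Z).map_add, inner_add_left]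

lemma q_add₃ (X Y Z Z' W : V) :
    T.q X Y (Z + Z') W = T.q X Y Z W + T.q X Y Z' W := by
  unfold q; rw [(T.lin₃ X Y).map_add, inner_add_left]

lemma q_add₄ (X Y Z W W' : V) :
    T.q X Y Z (W + W') = T.q X Y Z W + T.q X Y Z W' := inner_add_right _ _ _

lemma q_smul₁ (c : ℝ) (X Y Z W : V) : T.q (c • X) Y Z W = c * T.q X Y Z W := by
  unfold q; rw [(T.lin₁ Y Z).map_smul, real_inner_smul_left]

lemma q_smul₂ (c : ℝ) (X Y Z W : V) : T.q X (c • Y) Z W = c * T.q X Y Z W := by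
  unfold q; rw [(T.lin₂ X Z).map_smul, real_inner_smul_left]

lemma q_smul₃ (c : ℝ) (X Y Z W : V) : T.q X Y (c • Z) W = c * T.q X Y Z W := by
  unfold q; rw [(T.lin₃ X Y).map_smul, real_inner_smul_left]

lemma q_smul₄ (c : ℝ) (X Y Z W : V) : T.q X Y Z (c • W) = c * T.q X Y Z W :=
  real_inner_smul_right _ _ _

lemma q_neg₁ (X Y Z W : V) : T.q (-X) Y Z W = -T.q X Y Z W := by
  have := T.q_smul₁ (-1) X Y Z W; simpa using this

lemma q_neg₂ (X Y Z W : V) : T.q X (-Y) Z W = -T.q X Y Z W := by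
  have := T.q_smul₂ (-1) X Y Z W; simpa using this

lemma q_neg₃ (X Y Z W : V) : T.q X Y (-Z) W = -T.q X Y Z W := by
  have := T.q_smul₃ (-1) X Y Z W; simpa using this

lemma q_neg₄ (X Y Z W : V) : T.q X Y Z (-W) = -T.q X Y Z W := by
  have := T.q_smul₄ (-1) X Y Z W; simpa using this

lemma q_sub₁ (X X' Y Z W : V) :
    T.q (X - X') Y Z W = T.q X Y Z W - T.q X' Y Z W := by
  rw [sub_eq_add_neg, q_add₁, q_neg₁, sub_eq_add_neg]

lemma q_sub₂ (X Y Y' Z W : V) :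
    T.q X (Y - Y') Z W = T.q X Y Z W - T.q X Y' Z W := by
  rw [sub_eq_add_neg, q_add₂, q_neg₂, sub_eq_add_neg]

lemma q_sub₄ (X Y Z W W' : V) :
    T.q X Y Z (W - W') = T.q X Y Z W - T.q X Y Z W' := by
  rw [sub_eq_add_neg, q_add₄, q_neg₄, sub_eq_add_neg]

lemma q_zero₁ (Y Z W : V) : T.q 0 Y Z W = 0 := by
  unfold q; rw [(T.lin₁ Y Z).map_zero, inner_zero_left]

lemma q_zero₂ (X Z W : V) : T.q X 0 Z W = 0 := by
  unfold q; rw [(T.lin₂ X Z).map_zero, inner_zero_left]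

lemma q_zero₃ (X Y W : V) : T.q X Y 0 W = 0 := by
  unfold q; rw [(T.lin₃ X Y).map_zero, inner_zero_left]

/-- `⟪JX, X⟫ = 0`. -/
lemma inner_J_self (X : V) : ⟪T.J X, X⟫ = 0 := by
  have h := T.J_isometry (T.J X) X
  rw [T.J_sq, inner_neg_left, real_inner_comm (T.J X) X] at h
  linarith

/-- `⟪JX, Y⟫ = -⟪X, JY⟫`. -/
lemma inner_J_left (X Y : V) : ⟪T.J X, Y⟫ = -⟪X, T.J Y⟫ := by
  have h := T.J_isometry X (T.J Y)
  rw [T.J_sq, inner_neg_right] at h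
  linarith

/-- first-pair J-transfer : `q X (JY) Z W = q Y (JX) Z W`. -/
lemma q_Jtransfer (X Y Z W : V) : T.q X (T.J Y) Z W = T.q Y (T.J X) Z W := by
  have h := T.q_J12 X (T.J Y) Z W
  rw [T.J_sq, q_neg₂, T.q_swap₁ (T.J X) Y Z W] at h
  linarith

end KahlerModel

section H0

open KahlerModel

variable {V : Type*} [NormedAddCommGroup V] [InnerProductSpace ℝ V]
variable (T : KahlerModel V)
variable (hconst : ∀ X Y : V, Orthonormal ℝ ![X, T.J X, Y, T.J Y] →
  ⟪T.R X (T.J X) Y, T.J X⟫ = 0)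

include hconst

/-- pointwise constancy of holomorphic sectional curvature, polarized, scale-free form. -/
lemma H0 (X Y : V) (h1 : ⟪Y, X⟫ = 0) (h2 : ⟪Y, T.J X⟫ = 0) :
    T.q X (T.J X) Y (T.J X) = 0 := by
  by_cases hX : X = 0
  · simp [hX, q_zero₁]
  by_cases hY : Y = 0
  · simp [hY, q_zero₃]
  have hnX : ‖X‖ ≠ 0 := norm_ne_zero_iff.mpr hX
  have hnY : ‖Y‖ ≠ 0 := norm_ne_zero_iff.mpr hY
  set a : ℝ := ‖X‖⁻¹ with ha
  set b : ℝ := ‖Y‖⁻¹ with hb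
  have haz : a ≠ 0 := inv_ne_zero hnX
  have hbz : b ≠ 0 := inv_ne_zero hnY
  set X₀ : V := a • X with hX₀
  set Y₀ : V := b • Y with hY₀
  have hXX : ⟪X₀, X₀⟫ = 1 := by
    rw [hX₀, real_inner_smul_left, real_inner_smul_right, real_inner_self_eq_norm_sq,
      ha]
    field_simp
  have hYY : ⟪Y₀, Y₀⟫ = 1 := by
    rw [hY₀, real_inner_smul_left, real_inner_smul_right, real_inner_self_eq_norm_sq,
      hb]
    field_simp
  have hXY : ⟪X₀, Y₀⟫ = 0 := by
    rw [hX₀, hY₀, real_inner_smul_left, real_inner_smul_right, real_inner_comm Y X, h1]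
    ring
  have hXJY : ⟪Y₀, T.J X₀⟫ = 0 := by
    rw [hX₀, hY₀, map_smul, real_inner_smul_left, real_inner_smul_right, h2]
    ring
  have hJXY : ⟪X₀, T.J Y₀⟫ = 0 := by
    rw [real_inner_comm (T.J Y₀) X₀, T.inner_J_left Y₀ X₀, hXJY, neg_zero]
  have hXJX : ⟪X₀, T.J X₀⟫ = 0 := by
    rw [real_inner_comm (T.J X₀) X₀]; exact T.inner_J_self X₀
  have hYJY : ⟪Y₀, T.J Y₀⟫ = 0 := by
    rw [real_inner_comm (T.J Y₀) Y₀]; exact T.inner_J_self Y₀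
  have horth : Orthonormal ℝ ![X₀, T.J X₀, Y₀, T.J Y₀] := by
    rw [orthonormal_iff_ite]
    intro i j
    fin_cases i <;> fin_cases j <;>
      simp [T.J_isometry, T.inner_J_self, hXX, hYY, hXY, hXJY, hJXY, hXJX, hYJY,
        real_inner_comm X₀ Y₀, real_inner_comm Y₀ (T.J X₀), real_inner_comm X₀ (T.J Y₀),
        show ‖X₀‖ = 1 by rw [norm_eq_sqrt_real_inner, hXX, Real.sqrt_one],
        show ‖Y₀‖ = 1 by rw [norm_eq_sqrt_real_inner, hYY, Real.sqrt_one],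
        show ‖T.J X₀‖ = 1 by rw [norm_eq_sqrt_real_inner, T.J_isometry, hXX, Real.sqrt_one],
        show ‖T.J Y₀‖ = 1 by rw [norm_eq_sqrt_real_inner, T.J_isometry, hYY, Real.sqrt_one]]
  have hc : T.q X₀ (T.J X₀) Y₀ (T.J X₀) = 0 := hconst X₀ Y₀ horth
  have hexp : T.q X₀ (T.J X₀) Y₀ (T.J X₀)
      = a * (a * (b * (a * T.q X (T.J X) Y (T.J X)))) := by
    rw [hX₀, hY₀, map_smul, q_smul₁, q_smul₂, q_smul₃, q_smul₄]
  rw [hexp] at hc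
  rcases mul_eq_zero.mp hc with h | h
  · exact absurd h haz
  rcases mul_eq_zero.mp h with h | h
  · exact absurd h haz
  rcases mul_eq_zero.mp h with h | h
  · exact absurd h hbz
  rcases mul_eq_zero.mp h with h | h
  · exact absurd h haz
  exact h

/-- the companion vanishing: `q X (JX) Y X = 0` for `Y ⊥ X, JX`. -/
lemma H0' (X Y : V) (h1 : ⟪Y, X⟫ = 0) (h2 : ⟪Y, T.J X⟫ = 0) :
    T.q X (T.J X) Y X = 0 := by
  have key : T.q X (T.J X) (T.J Y) (T.J X) = 0 := by
    apply H0 T hconst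
    · rw [T.inner_J_left Y X, h2, neg_zero]
    · rw [T.J_isometry, h1]
  have h := T.q_J34 X (T.J X) Y X
  rw [key] at h
  linarith

/-- Lemma C : the component of `R(e,f)e` orthogonal to `e, f, Je, Jf` vanishes. -/
lemma lemC (e f u : V) (hue : ⟪u, e⟫ = 0) (huf : ⟪u, f⟫ = 0)
    (huJe : ⟪u, T.J e⟫ = 0) (huJf : ⟪u, T.J f⟫ = 0) :
    T.q e f e u = 0 := by
  have Qe : T.q e (T.J e) u (T.J e) = 0 := H0 T hconst e u hue huJe
  have Qf : T.q f (T.J f) u (T.J f) = 0 := H0 T hconst f u huf huJf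
  have Ze : T.q e (T.J e) u e = 0 := H0' T hconst e u hue huJe
  have F1 : T.q (e + f) (T.J (e + f)) u (T.J (e + f)) = 0 := by
    apply H0 T hconst
    · rw [inner_add_right, hue, huf]; ring
    · rw [map_add, inner_add_right, huJe, huJf]; ring
  have F2 : T.q (e - f) (T.J (e - f)) u (T.J (e - f)) = 0 := by
    apply H0 T hconst
    · rw [inner_sub_right, hue, huf]; ring
    · rw [map_sub, inner_sub_right, huJe, huJf]; ring
  have F3 : T.q (f + T.J e) (T.J (f + T.J e)) u (T.J (f + T.J e)) = 0 := by
    apply H0 T hconst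
    · rw [inner_add_right, huf, huJe]; ring
    · rw [map_add, T.J_sq, inner_add_right, inner_neg_right, huJf, hue]; ring
  have F4 : T.q (f - T.J e) (T.J (f - T.J e)) u (T.J (f - T.J e)) = 0 := by
    apply H0 T hconst
    · rw [inner_sub_right, huf, huJe]; ring
    · rw [map_sub, T.J_sq, inner_sub_right, inner_neg_right, huJf, hue]; ring
  simp only [map_add, map_sub, T.J_sq, q_add₁, q_add₂, q_add₄, q_sub₁, q_sub₂, q_sub₄,
    q_neg₂, q_neg₄] at F1 F2 F3 F4
  have C1 : T.q e (T.J f) u (T.J e) = T.q f (T.J e) u (T.J e) := T.q_Jtransfer e f u (T.J e)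
  have C2 : T.q e (T.J f) u (T.J f) = T.q f (T.J e) u (T.J f) := T.q_Jtransfer e f u (T.J f)
  have D1 : T.q (T.J e) (T.J f) u (T.J f) = T.q e f u (T.J f) := T.q_J12 e f u (T.J f)
  have D2 : T.q (T.J e) (T.J f) u e = T.q e f u e := T.q_J12 e f u e
  have D3 : T.q (T.J e) e u (T.J f) = -T.q e (T.J e) u (T.J f) :=
    (T.q_swap₁ (T.J e) e u (T.J f)).trans (by rw [← T.q_swap₁])
  have D4 : T.q (T.J e) e u e = -T.q e (T.J e) u e :=
    (T.q_swap₁ (T.J e) e u e).trans (by rw [← T.q_swap₁])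
  have D5 : T.q f e u (T.J f) = -T.q e f u (T.J f) := T.q_swap₁ f e u (T.J f)
  have D6 : T.q f e u e = -T.q e f u e := T.q_swap₁ f e u e
  have Bi : T.q e (T.J e) u (T.J f) + T.q (T.J e) u e (T.J f) + T.q u e (T.J e) (T.J f) = 0 :=
    T.q_bianchi e (T.J e) u (T.J f)
  have P1 : T.q (T.J e) u e (T.J f) = T.q e (T.J f) (T.J e) u := T.q_pair (T.J e) u e (T.J f)
  have P2 : T.q e (T.J f) (T.J e) u = T.q f (T.J e) (T.J e) u := T.q_Jtransfer e f (T.J e) u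
  have P3 : T.q f (T.J e) (T.J e) u = -T.q f (T.J e) u (T.J e) := T.q_swap₂ f (T.J e) (T.J e) u
  have P4 : T.q u e (T.J e) (T.J f) = T.q (T.J e) (T.J f) u e := T.q_pair u e (T.J e) (T.J f)
  have key : T.q e f u e = 0 := by linarith
  have h := T.q_swap₂ e f e u
  rw [h, key, neg_zero]

/-- Lemma A : `⟪R(e,f)e, Je⟫ = 0` when `e ⊥ f` and `Je ⊥ f`. -/
lemma lemA (e f : V) (hef : ⟪f, e⟫ = 0) (hJef : ⟪f, T.J e⟫ = 0) :
    T.q e f e (T.J e) = 0 := by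
  have hJfe : ⟪T.J f, e⟫ = 0 := by
    rw [T.inner_J_left f e, hJef, neg_zero]
  have QQ : T.q e (T.J e) (T.J f) (T.J e) = 0 :=
    H0 T hconst e (T.J f) hJfe (by rw [T.J_isometry, hef])
  have h1 : T.q e (T.J e) f e = 0 := by
    have h := T.q_J34 e (T.J e) f e
    rw [QQ] at h; linarith
  rw [T.q_pair e f e (T.J e), T.q_swap₂ e (T.J e) e f, h1, neg_zero]

/-- Lemma B, normalized core : `⟪R(e,f)e, Jf⟫ = 0` for `e ⊥ f`, `Je ⊥ f`, equal norms. -/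
lemma lemB_core (e f : V) (hef : ⟪f, e⟫ = 0) (hJef : ⟪f, T.J e⟫ = 0)
    (hnorm : ⟪e, e⟫ = ⟪f, f⟫) :
    T.q e f e (T.J f) = 0 := by
  have hef' : ⟪e, f⟫ = 0 := by rw [real_inner_comm f e]; exact hef
  have hJfe : ⟪T.J f, e⟫ = 0 := by rw [T.inner_J_left f e, hJef, neg_zero]
  have heJf : ⟪e, T.J f⟫ = 0 := by rw [real_inner_comm (T.J f) e]; exact hJfe
  have hJe_f : ⟪T.J e, f⟫ = 0 := by rw [T.inner_J_left e f, heJf, neg_zero]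
  have hfJf : ⟪f, T.J f⟫ = 0 := by
    rw [real_inner_comm (T.J f) f]; exact T.inner_J_self f
  have E : T.q (e + T.J f) (T.J (e + T.J f)) (T.J e + f) (T.J (e + T.J f)) = 0 := by
    apply H0 T hconst
    · rw [inner_add_left, inner_add_right, inner_add_right, T.inner_J_self e,
        T.J_isometry, hef', hef, hfJf]
      ring
    · rw [map_add, T.J_sq, inner_add_left, inner_add_right, inner_add_right,
        inner_neg_right, inner_neg_right, T.J_isometry, hJe_f, hJef, hnorm]
      ring
  simp only [map_add, T.J_sq, q_add₁, q_add₂, q_add₃, q_add₄, q_neg₂, q_neg₄,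
    KahlerModel.q_self₂] at E
  have QQ : T.q e (T.J e) f (T.J e) = 0 := H0 T hconst e f hef hJef
  have Z3 : T.q e (T.J e) (T.J e) f = 0 := by
    rw [T.q_swap₂ e (T.J e) (T.J e) f, QQ, neg_zero]
  have G1 : T.q (T.J f) (T.J e) (T.J e) f = T.q f e (T.J e) f := T.q_J12 f e (T.J e) f
  have G2 : T.q f e (T.J e) f = -T.q e f (T.J e) f := T.q_swap₁ f e (T.J e) f
  have Z1 : T.q f (T.J f) e (T.J f) = 0 := H0 T hconst f e hef' heJf
  have Z2 : T.q f (T.J f) (T.J e) f = 0 := by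
    have h := T.q_J34 f (T.J f) (T.J e) f
    rw [T.J_sq, q_neg₃, Z1] at h; linarith
  have G3 : T.q (T.J f) f (T.J e) f = -T.q f (T.J f) (T.J e) f :=
    T.q_swap₁ (T.J f) f (T.J e) f
  have S1 : T.q e (T.J e) f (T.J e) = -T.q e (T.J e) (T.J e) f :=
    T.q_swap₂ e (T.J e) f (T.J e)
  have S2 : T.q e f f (T.J e) = -T.q e f (T.J e) f := T.q_swap₂ e f f (T.J e)
  have S3 : T.q (T.J f) (T.J e) f (T.J e) = -T.q (T.J f) (T.J e) (T.J e) f :=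
    T.q_swap₂ (T.J f) (T.J e) f (T.J e)
  have S4 : T.q (T.J f) f f (T.J e) = -T.q (T.J f) f (T.J e) f :=
    T.q_swap₂ (T.J f) f f (T.J e)
  have key : T.q e f (T.J e) f = 0 := by linarith
  have h := T.q_J34 e f (T.J e) f
  rw [T.J_sq, q_neg₃, key] at h
  linarith

/-- Lemma B : `⟪R(e,f)e, Jf⟫ = 0` when `e ⊥ f` and `Je ⊥ f`. -/
lemma lemB (e f : V) (hef : ⟪f, e⟫ = 0) (hJef : ⟪f, T.J e⟫ = 0) :
    T.q e f e (T.J f) = 0 := by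
  by_cases he : e = 0
  · simp [he, q_zero₁]
  by_cases hf : f = 0
  · simp [hf, q_zero₂]
  have hne : ‖e‖ ≠ 0 := norm_ne_zero_iff.mpr he
  have hnf : ‖f‖ ≠ 0 := norm_ne_zero_iff.mpr hf
  set c : ℝ := ‖e‖ / ‖f‖ with hc
  have hcz : c ≠ 0 := div_ne_zero hne hnf
  have h1 : ⟪c • f, e⟫ = 0 := by rw [real_inner_smul_left, hef, mul_zero]
  have h2 : ⟪c • f, T.J e⟫ = 0 := by rw [real_inner_smul_left, hJef, mul_zero]
  have h3 : ⟪e, e⟫ = ⟪c • f, c • f⟫ := by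
    rw [real_inner_smul_left, real_inner_smul_right, real_inner_self_eq_norm_sq,
      real_inner_self_eq_norm_sq, hc]
    field_simp
  have hcore := lemB_core T hconst e (c • f) h1 h2 h3
  rw [map_smul, q_smul₂, q_smul₄] at hcore
  rcases mul_eq_zero.mp hcore with h | h
  · exact absurd h hcz
  rcases mul_eq_zero.mp h with h | h
  · exact absurd h hcz
  · exact h

end H0

theorem totally_real_subspace_verySpecial_of_constant_holomorphic {V : Type*} [NormedAddCommGroup V] [InnerProductSpace ℝ V] [FiniteDimensional ℝ V]
    (T : KahlerModel V) (m : ℕ) (hm : 2 ≤ m) (hdim : finrank ℝ V = 2 * m)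
    (hconst : ∀ X Y : V, Orthonormal ℝ ![X, T.J X, Y, T.J Y] →
      ⟪T.R X (T.J X) Y, T.J X⟫ = 0)
    (W : Submodule ℝ V) (hTR : T.IsTotallyReal W)
    (v w : V) (hv : v ∈ W) (hw : w ∈ W) :
    T.R v w v ∈ W := by
  open KahlerModel in
  suffices h : ∀ u ∈ Wᗮ, (inner ℝ (T.R v w v) u : ℝ) = 0 by
    have hmem : T.R v w v ∈ Wᗮᗮ := by
      rw [Submodule.mem_orthogonal]
      intro x hx
      rw [real_inner_comm]
      exact h x hx
    rwa [Submodule.orthogonal_orthogonal] at hmem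
  intro u hu
  have hWu : ∀ x ∈ W, (inner ℝ x u : ℝ) = 0 := (Submodule.mem_orthogonal W u).mp hu
  show T.q v w v u = 0
  by_cases hv0 : v = 0
  · simp [hv0, KahlerModel.q_zero₁]
  have hvv : (inner ℝ v v : ℝ) ≠ 0 := inner_self_ne_zero.mpr hv0
  set L : ℝ := (inner ℝ w v : ℝ) / (inner ℝ v v : ℝ) with hL
  set w' : V := w - L • v with hw'def
  have hw'W : w' ∈ W := W.sub_mem hw (W.smul_mem L hv)
  have hvw' : (inner ℝ w' v : ℝ) = 0 := by
    rw [hw'def, inner_sub_left, real_inner_smul_left, hL]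
    field_simp
    ring
  have hred : T.q v w v u = T.q v w' v u := by
    rw [hw'def, KahlerModel.q_sub₂, KahlerModel.q_smul₂, T.q_self₁]
    ring
  rw [hred]
  by_cases hw'0 : w' = 0
  · simp [hw'0, KahlerModel.q_zero₂]
  have hw'w' : (inner ℝ w' w' : ℝ) ≠ 0 := inner_self_ne_zero.mpr hw'0
  have hJvw' : (inner ℝ (T.J v) w' : ℝ) = 0 := hTR v hv w' hw'W
  have hJw'v : (inner ℝ (T.J w') v : ℝ) = 0 := hTR w' hw'W v hv
  have hw'Jv : (inner ℝ w' (T.J v) : ℝ) = 0 := by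
    rw [real_inner_comm (T.J v) w']; exact hJvw'
  have hvJw' : (inner ℝ v (T.J w') : ℝ) = 0 := by
    rw [real_inner_comm (T.J w') v]; exact hJw'v
  have huv : (inner ℝ u v : ℝ) = 0 := by
    rw [real_inner_comm v u]; exact hWu v hv
  have huw' : (inner ℝ u w' : ℝ) = 0 := by
    rw [real_inner_comm w' u]; exact hWu w' hw'W
  set c₁ : ℝ := (inner ℝ u (T.J v) : ℝ) / (inner ℝ v v : ℝ) with hc₁
  set c₂ : ℝ := (inner ℝ u (T.J w') : ℝ) / (inner ℝ w' w' : ℝ) with hc₂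
  set u₂ : V := u - c₁ • T.J v - c₂ • T.J w' with hu₂def
  have hJvJw' : (inner ℝ (T.J v) (T.J w') : ℝ) = 0 := by
    rw [T.J_isometry, real_inner_comm w' v]; exact hvw'
  have hJw'Jv : (inner ℝ (T.J w') (T.J v) : ℝ) = 0 := by
    rw [T.J_isometry]; exact hvw'
  have h1 : (inner ℝ u₂ v : ℝ) = 0 := by
    rw [hu₂def, inner_sub_left, inner_sub_left, real_inner_smul_left,
      real_inner_smul_left, T.inner_J_self v, hJw'v, huv]
    ring
  have h2 : (inner ℝ u₂ w' : ℝ) = 0 := by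
    rw [hu₂def, inner_sub_left, inner_sub_left, real_inner_smul_left,
      real_inner_smul_left, T.inner_J_self w', hJvw', huw']
    ring
  have h3 : (inner ℝ u₂ (T.J v) : ℝ) = 0 := by
    rw [hu₂def, inner_sub_left, inner_sub_left, real_inner_smul_left,
      real_inner_smul_left, T.J_isometry, hJw'Jv, hc₁]
    field_simp
    ring
  have h4 : (inner ℝ u₂ (T.J w') : ℝ) = 0 := by
    rw [hu₂def, inner_sub_left, inner_sub_left, real_inner_smul_left,
      real_inner_smul_left, hJvJw', T.J_isometry, hc₂]
    field_simp
    ring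
  have hdecomp : u = u₂ + c₁ • T.J v + c₂ • T.J w' := by
    rw [hu₂def]; abel
  have hsplit : T.q v w' v u
      = T.q v w' v u₂ + c₁ * T.q v w' v (T.J v) + c₂ * T.q v w' v (T.J w') := by
    conv_lhs => rw [hdecomp]
    rw [KahlerModel.q_add₄, KahlerModel.q_add₄, KahlerModel.q_smul₄, KahlerModel.q_smul₄]
  rw [hsplit]
  have hC : T.q v w' v u₂ = 0 := lemC T hconst v w' u₂ h1 h2 h3 h4
  have hA : T.q v w' v (T.J v) = 0 := lemA T hconst v w' hvw' hw'Jv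
  have hB : T.q v w' v (T.J w') = 0 := lemB T hconst v w' hvw' hw'Jv
  rw [hC, hA, hB]
  ring
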